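/- Let N, m ∈ ℕ, ρ > 0, ν > 0, L > 0, σ₋ > 0, σ₊ > 0 and κ > 1. Let I₊ and I₋ be real N×m matrices with ‖I₊ u‖ ≤ σ₊‖u‖ for all u ∈ ℝ^m and ‖I₊ᵀ v‖ ≤ σ₊‖v‖ for all v ∈ ℝ^N. Let f : ℝ^N → ℝ be differentiable with ⟨∇f(u) − ∇f(v), u − v⟩ ≥ ν‖u − v‖² and ‖∇f(u) − ∇f(v)‖ ≤ L‖u − v‖ for all u, v. Suppose x̂, x* ∈ ℝ^N and ẑ, z, z*, β̂, β, β* ∈ ℝ^m satisfy: (i) ∇f(x̂) + I₋ β̂ = ρ·I₊(z − ẑ); (ii) (ρ/2)·I₋ᵀ(x̂ − x*) = β̂ − β; (iii) (1/2)·I₊ᵀ(x̂ − x*) = ẑ − z*; (iv) ∇f(x*) + I₋ β* = 0; (v) I₋ᵀ x* = 0; (vi) ‖I₋(β̂ − β*)‖ ≥ σ₋‖β̂ − β*‖. Define c := min{ (κ−1)σ₋²/(κσ₊²), ν/( κL²/(ρσ₋²) + (ρ/4)σ₊² ) } and for pairs w = (z, β) the G-norm ‖w‖²_G := ρ‖z‖²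 + (1/ρ)‖β‖². Then, writing ŵ = (ẑ, β̂), w = (z, β), w* = (z*, β*): ‖ŵ − w*‖²_G ≤ (1/(1+c))·‖w − w*‖²_G. -/

import Mathlib

open scoped RealInnerProductSpace

lemma adj_inner_aux {N m : ℕ} (M : Matrix (Fin N) (Fin m) ℝ)
    (v : EuclideanSpace ℝ (Fin m)) (w : EuclideanSpace ℝ (Fin N)) :
    ⟪M.toEuclideanLin v, w⟫ = ⟪v, M.transpose.toEuclideanLin w⟫ := by
  have h : M.transpose = M.conjTranspose := (Matrix.conjTranspose_eq_transpose_of_trivial M).symm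
  rw [h, Matrix.toEuclideanLin_conjTranspose_eq_adjoint]
  exact (LinearMap.adjoint_inner_right _ v w).symm

lemma polar_aux {E : Type*} [NormedAddCommGroup E] [InnerProductSpace ℝ E] (a b c : E) :
    2 * ⟪a - b, b - c⟫ = ‖a - c‖ ^ 2 - ‖b - c‖ ^ 2 - ‖a - b‖ ^ 2 := by
  have h : a - c = (a - b) + (b - c) := by abel
  rw [h, norm_add_sq_real]; ring

theorem stmt_10 (N m : ℕ) (ρ ν L σm σp κ : ℝ)
    (hρ : 0 < ρ) (hν : 0 < ν) (hL : 0 < L) (hσm : 0 < σm) (hσp : 0 < σp) (hκ : 1 < κ)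
    (Iplus Iminus : Matrix (Fin N) (Fin m) ℝ)
    (hIp : ∀ u : EuclideanSpace ℝ (Fin m), ‖Iplus.toEuclideanLin u‖ ≤ σp * ‖u‖)
    (hIpT : ∀ v : EuclideanSpace ℝ (Fin N), ‖Iplus.transpose.toEuclideanLin v‖ ≤ σp * ‖v‖)
    (f : EuclideanSpace ℝ (Fin N) → ℝ)
    (gradf : EuclideanSpace ℝ (Fin N) → EuclideanSpace ℝ (Fin N))
    (hgrad : ∀ u, HasGradientAt f (gradf u) u)
    (hmono : ∀ u v : EuclideanSpace ℝ (Fin N),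
      ν * ‖u - v‖ ^ 2 ≤ ⟪gradf u - gradf v, u - v⟫)
    (hlip : ∀ u v : EuclideanSpace ℝ (Fin N), ‖gradf u - gradf v‖ ≤ L * ‖u - v‖)
    (xhat xstar : EuclideanSpace ℝ (Fin N))
    (zhat z zstar βhat β βstar : EuclideanSpace ℝ (Fin m))
    (h1 : gradf xhat + Iminus.toEuclideanLin βhat = ρ • Iplus.toEuclideanLin (z - zhat))
    (h2 : (ρ / 2) • Iminus.transpose.toEuclideanLin (xhat - xstar) = βhat - β)
    (h3 : (1 / 2 : ℝ) • Iplus.transpose.toEuclideanLin (xhat - xstar) = zhat - zstar)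
    (h4 : gradf xstar + Iminus.toEuclideanLin βstar = 0)
    (h5 : Iminus.transpose.toEuclideanLin xstar = 0)
    (h6 : σm * ‖βhat - βstar‖ ≤ ‖Iminus.toEuclideanLin (βhat - βstar)‖)
    (c : ℝ)
    (hc : c = min ((κ - 1) * σm ^ 2 / (κ * σp ^ 2))
               (ν / (κ * L ^ 2 / (ρ * σm ^ 2) + (ρ / 4) * σp ^ 2))) :
    ρ * ‖zhat - zstar‖ ^ 2 + (1 / ρ) * ‖βhat - βstar‖ ^ 2
      ≤ (1 / (1 + c)) * (ρ * ‖z - zstar‖ ^ 2 + (1 / ρ) * ‖β - βstar‖ ^ 2) := by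
  have hρne : ρ ≠ 0 := hρ.ne'
  have hκ0 : (0:ℝ) < κ - 1 := by linarith
  -- derived equations
  have hdiff : gradf xhat - gradf xstar + Iminus.toEuclideanLin (βhat - βstar)
      = ρ • Iplus.toEuclideanLin (z - zhat) := by
    have e : gradf xhat - gradf xstar + Iminus.toEuclideanLin (βhat - βstar)
        = (gradf xhat + Iminus.toEuclideanLin βhat)
          - (gradf xstar + Iminus.toEuclideanLin βstar) := by
      rw [map_sub]; abel
    rw [e, h1, h4, sub_zero]
  have hz : Iplus.transpose.toEuclideanLin (xhat - xstar) = (2:ℝ) • (zhat - zstar) := by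
    rw [← h3, smul_smul]; norm_num
  have hβ : Iminus.transpose.toEuclideanLin (xhat - xstar) = (2/ρ) • (βhat - β) := by
    have e : (2/ρ) * (ρ/2) = 1 := by field_simp
    rw [← h2, smul_smul, e, one_smul]
  have hip : ⟪gradf xhat - gradf xstar, xhat - xstar⟫
      + ⟪βhat - βstar, Iminus.transpose.toEuclideanLin (xhat - xstar)⟫
      = ρ * ⟪z - zhat, Iplus.transpose.toEuclideanLin (xhat - xstar)⟫ := by
    have h := congrArg (fun y => ⟪y, xhat - xstar⟫) hdiff
    simp only [inner_add_left, real_inner_smul_left] at h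
    rw [adj_inner_aux, adj_inner_aux] at h
    exact h
  have hinner1 : ⟪z - zhat, Iplus.transpose.toEuclideanLin (xhat - xstar)⟫
      = ‖z - zstar‖^2 - ‖zhat - zstar‖^2 - ‖z - zhat‖^2 := by
    rw [hz, real_inner_smul_right]
    linarith [polar_aux z zhat zstar]
  have hinner2 : ⟪βhat - βstar, Iminus.transpose.toEuclideanLin (xhat - xstar)⟫
      = -(1/ρ) * (‖β - βstar‖^2 - ‖βhat - βstar‖^2 - ‖β - βhat‖^2) := by
    rw [hβ, real_inner_smul_right, real_inner_comm]
    have e1 : ⟪βhat - β, βhat - βstar⟫ = -⟪β - βhat, βhat - βstar⟫ := by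
      rw [show βhat - β = -(β - βhat) from by abel, inner_neg_left]
    rw [e1, show (2/ρ) * -⟪β - βhat, βhat - βstar⟫
        = -(1/ρ) * (2 * ⟪β - βhat, βhat - βstar⟫) from by ring,
      polar_aux β βhat βstar]
  -- abbreviations
  have F1 : ν * ‖xhat - xstar‖^2 ≤ ρ * (‖z - zstar‖^2 - ‖zhat - zstar‖^2 - ‖z - zhat‖^2) + (1/ρ) * (‖β - βstar‖^2 - ‖βhat - βstar‖^2 - ‖β - βhat‖^2) := by
    have hm := hmono xhat xstar
    rw [hinner1, hinner2] at hip
    linarith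
  have F2 : ‖zhat - zstar‖ ≤ (σp/2) * ‖xhat - xstar‖ := by
    rw [← h3, norm_smul]
    have := hIpT (xhat - xstar)
    simp only [Real.norm_eq_abs]
    rw [show |(1/2 : ℝ)| = 1/2 by norm_num]
    linarith
  have F3 : σm * ‖βhat - βstar‖ ≤ L * ‖xhat - xstar‖ + ρ * σp * ‖z - zhat‖ := by
    refine h6.trans ?_
    have hBeq : Iminus.toEuclideanLin (βhat - βstar)
        = ρ • Iplus.toEuclideanLin (z - zhat) - (gradf xhat - gradf xstar) := by
      rw [← hdiff]; abel
    rw [hBeq]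
    have e1 : ‖ρ • Iplus.toEuclideanLin (z - zhat)‖ = ρ * ‖Iplus.toEuclideanLin (z - zhat)‖ := by
      rw [norm_smul, Real.norm_eq_abs, abs_of_pos hρ]
    calc ‖ρ • Iplus.toEuclideanLin (z - zhat) - (gradf xhat - gradf xstar)‖
        ≤ ‖ρ • Iplus.toEuclideanLin (z - zhat)‖ + ‖gradf xhat - gradf xstar‖ := norm_sub_le _ _
      _ ≤ ρ * (σp * ‖z - zhat‖) + L * ‖xhat - xstar‖ := by
          rw [e1]
          have := hIp (z - zhat)
          have := hlip xhat xstar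
          have := mul_le_mul_of_nonneg_left (hIp (z - zhat)) hρ.le
          linarith
      _ = L * ‖xhat - xstar‖ + ρ * σp * ‖z - zhat‖ := by ring
  set X := ‖xhat - xstar‖ with hX
  set Y := ‖z - zhat‖ with hY
  set Zh := ‖zhat - zstar‖ with hZh
  set Bh := ‖βhat - βstar‖ with hBh
  set W := ‖β - βhat‖ with hW
  set Z0 := ‖z - zstar‖ with hZ0
  set B0 := ‖β - βstar‖ with hB0
  have hXn : 0 ≤ X := norm_nonneg _
  have hYn : 0 ≤ Y := norm_nonneg _
  have hZhn : 0 ≤ Zh := norm_nonneg _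
  have hBhn : 0 ≤ Bh := norm_nonneg _
  clear_value X Y Zh Bh W Z0 B0
  clear hip hinner1 hinner2 hdiff hz hβ h1 h2 h3 h4 h5 h6 hmono hlip hgrad hIp hIpT
  -- scalar consequences of hc
  have hc1 : c ≤ (κ - 1) * σm ^ 2 / (κ * σp ^ 2) := hc ▸ min_le_left _ _
  have hc2 : c ≤ ν / (κ * L ^ 2 / (ρ * σm ^ 2) + (ρ / 4) * σp ^ 2) := hc ▸ min_le_right _ _
  have hcpos : 0 < c := by
    rw [hc]
    refine lt_min (div_pos (mul_pos hκ0 (pow_pos hσm 2)) (by positivity)) (div_pos hν ?_)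
    positivity
  have P1 : c * (κ * σp ^ 2) ≤ (κ - 1) * σm ^ 2 := (le_div_iff₀ (by positivity)).mp hc1
  have P2 : c * (4*κ*L^2 + ρ^2*σm^2*σp^2) ≤ 4*ν*ρ*σm^2 := by
    have hD2 : (0:ℝ) < κ * L ^ 2 / (ρ * σm ^ 2) + (ρ / 4) * σp ^ 2 := by positivity
    have h := (le_div_iff₀ hD2).mp hc2
    have h' := mul_le_mul_of_nonneg_right h (by positivity : (0:ℝ) ≤ 4*ρ*σm^2)
    calc c * (4*κ*L^2 + ρ^2*σm^2*σp^2)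
        = c * (κ * L ^ 2 / (ρ * σm ^ 2) + (ρ / 4) * σp ^ 2) * (4*ρ*σm^2) := by
          field_simp
      _ ≤ ν * (4*ρ*σm^2) := h'
      _ = 4*ν*ρ*σm^2 := by ring
  have Q1 : 4 * Zh^2 ≤ σp^2 * X^2 := by
    have hq : Zh^2 ≤ ((σp/2) * X)^2 := by
      apply pow_le_pow_left₀ hZhn F2
    have e : ((σp/2) * X)^2 = σp^2 * X^2 / 4 := by ring
    linarith
  have Q2 : (κ-1) * (σm^2 * Bh^2) ≤ (κ-1)*κ*L^2*X^2 + κ*ρ^2*σp^2*Y^2 := by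
    have hsq : (σm * Bh)^2 ≤ (L * X + ρ * σp * Y)^2 :=
      pow_le_pow_left₀ (by positivity) F3 2
    have hsq2 : (κ-1) * (σm * Bh)^2 ≤ (κ-1) * (L * X + ρ * σp * Y)^2 :=
      mul_le_mul_of_nonneg_left hsq hκ0.le
    have hS : 0 ≤ ((κ-1)*(L*X) - ρ*σp*Y)^2 := sq_nonneg _
    linarith [hsq2, hS]
  have T' : c * ((κ-1)*σm^2) * (ρ^2*Zh^2 + Bh^2) ≤ ((κ-1)*σm^2) * (ρ*ν*X^2 + ρ^2*Y^2) := by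
    have ha := mul_le_mul_of_nonneg_left Q2 hcpos.le
    have hbpos : (0:ℝ) ≤ c * ((κ-1) * σm^2) * ρ^2 / 4 :=
      div_nonneg (mul_nonneg (mul_nonneg hcpos.le
        (mul_nonneg hκ0.le (sq_nonneg σm))) (sq_nonneg ρ)) (by norm_num)
    have hb := mul_le_mul_of_nonneg_left Q1 hbpos
    have hcY := mul_le_mul_of_nonneg_right P1
      (mul_nonneg (sq_nonneg ρ) (sq_nonneg Y))
    have hdX := mul_le_mul_of_nonneg_right P2
      (by positivity <;> skip : (0:ℝ) ≤ (κ-1) * X^2 / 4)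
    linarith [ha, hb, hcY, hdX]

  have T : c * (ρ^2*Zh^2 + Bh^2) ≤ ρ*ν*X^2 + ρ^2*Y^2 := by
    have hpos2 : (0:ℝ) < (κ-1)*σm^2 := mul_pos hκ0 (pow_pos hσm 2)
    rw [show c * ((κ-1)*σm^2) * (ρ^2*Zh^2 + Bh^2)
        = ((κ-1)*σm^2) * (c * (ρ^2*Zh^2 + Bh^2)) from by ring] at T'
    exact (mul_le_mul_iff_right₀ hpos2).mp T'
  have M' : ρ*ν*X^2 + ρ^2*Zh^2 + ρ^2*Y^2 + Bh^2 + W^2 ≤ ρ^2*Z0^2 + B0^2 := by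
    have h := mul_le_mul_of_nonneg_left F1 hρ.le
    have e : ρ * (ρ * (Z0^2 - Zh^2 - Y^2) + (1/ρ) * (B0^2 - Bh^2 - W^2))
        = ρ^2*(Z0^2 - Zh^2 - Y^2) + (B0^2 - Bh^2 - W^2) := by
      field_simp
    rw [e] at h
    linarith [h]
  have h1c : (0:ℝ) < 1 + c := by linarith
  have final' : (ρ^2*Zh^2 + Bh^2) * (1+c) ≤ ρ^2*Z0^2 + B0^2 := by
    linarith [T, M', sq_nonneg W]
  calc ρ * Zh^2 + (1/ρ) * Bh^2 = (1/ρ) * (ρ^2*Zh^2 + Bh^2) := by field_simp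
    _ ≤ (1/ρ) * ((1/(1+c)) * (ρ^2*Z0^2 + B0^2)) := by
        apply mul_le_mul_of_nonneg_left _ (by positivity)
        rw [show (1/(1+c)) * (ρ^2*Z0^2 + B0^2) = (ρ^2*Z0^2 + B0^2)/(1+c) from by ring]
        exact (le_div_iff₀ h1c).mpr final'
    _ = (1/(1+c)) * (ρ * Z0^2 + (1/ρ) * B0^2) := by
        have e2 : (1/ρ) * (ρ^2*Z0^2 + B0^2) = ρ * Z0^2 + (1/ρ) * B0^2 := by
          field_simp
        rw [show (1/ρ) * ((1/(1+c)) * (ρ^2*Z0^2 + B0^2))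
            = (1/(1+c)) * ((1/ρ) * (ρ^2*Z0^2 + B0^2)) from by ring, e2]
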